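/- Let 0 < ε < 1/2, 0 < β < 1/4 − ε/2 and μ₀ > 0. Let (E, s) be a k-uniform hypergraph structure on [n] and suppose the direct sum lifting dsum : F₂ⁿ → F₂^E is a (1/2+2μ₀, 2ε)-parity sampler. Let C₁ ⊆ F₂ⁿ be nonempty and C_k = dsum(C₁). Suppose ỹ ∈ F₂^E satisfies Δ(ỹ, C_k) < 1/4 − ε/2 − β, and let z* ∈ C₁ be such that y* = dsum(z*) attains the minimum of Δ(·, ỹ) over C_k. Then for every z ∈ F₂ⁿ with Δ(dsum(z), ỹ) < 1/4 − ε/2, either Δ(z*, z) ≤ 1/4 − μ₀ or Δ(z*, z̄) ≤ 1/4 − μ₀, where z̄ denotes the coordinatewise complement of z. -/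

import Mathlib

open Finset

/-- Relative Hamming distance between two words (uniform measure on coordinates). -/
noncomputable def relHam {m : Type*} [Fintype m] {α : Type*} [DecidableEq α]
    (x y : m → α) : ℝ :=
  ((Finset.univ.filter fun j => x j ≠ y j).card : ℝ) / (Fintype.card m : ℝ)

/-- The bias of a word over `F₂`: `|E_j (−1)^{z_j}|`. -/
noncomputable def bias2 {m : Type*} [Fintype m] (z : m → ZMod 2) : ℝ :=
  |∑ j, (-1 : ℝ) ^ (z j).val| / (Fintype.card m : ℝ)

/-- The direct sum lifting `(dsum z)_e = Σ_{i ∈ s e} z_i (mod 2)`. -/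
def dsumLift {n : ℕ} {E : Type*} (s : E → Finset (Fin n))
    (z : Fin n → ZMod 2) (e : E) : ZMod 2 :=
  ∑ i ∈ s e, z i

/-- **Unique decoding on parity samplers.** If the direct sum lifting over a `k`-uniform
hypergraph structure is a `(1/2+2μ₀, 2ε)`-parity sampler, `ỹ` has distance
`< 1/4 − ε/2 − β` from `C_k = dsum(C₁)` attained by `z* ∈ C₁`, then any `z` with
`Δ(dsum z, ỹ) < 1/4 − ε/2` has `z` or its complement within distance `1/4 − μ₀` of `z*`. -/
lemma relHam_symm' {m : Type*} [Fintype m] {α : Type*} [DecidableEq α]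
    (x y : m → α) : relHam x y = relHam y x := by
  unfold relHam
  congr 2
  exact congrArg Finset.card (Finset.filter_congr fun j _ => by simp [ne_comm])

lemma relHam_triangle' {m : Type*} [Fintype m] [Nonempty m] {α : Type*} [DecidableEq α]
    (x y z : m → α) : relHam x z ≤ relHam x y + relHam y z := by
  classical
  have hc : (0:ℝ) < Fintype.card m := by exact_mod_cast Fintype.card_pos
  unfold relHam
  rw [← add_div, div_le_div_iff_of_pos_right hc]
  have hsub : (univ.filter fun j => x j ≠ z j) ⊆
      (univ.filter fun j => x j ≠ y j) ∪ (univ.filter fun j => y j ≠ z j) := by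
    intro j hj
    simp only [mem_filter, mem_union, mem_univ, true_and] at *
    by_contra h
    push_neg at h
    exact hj (h.1.trans h.2)
  calc ((univ.filter fun j => x j ≠ z j).card : ℝ)
      ≤ ((univ.filter fun j => x j ≠ y j) ∪ (univ.filter fun j => y j ≠ z j)).card := by
        exact_mod_cast Finset.card_le_card hsub
    _ ≤ _ := by exact_mod_cast Finset.card_union_le _ _

lemma bias2_eq' {m : Type*} [Fintype m] [Nonempty m] (x y : m → ZMod 2) :
    bias2 (fun j => x j + y j) = |1 - 2 * relHam x y| := by
  have hc : (0:ℝ) < Fintype.card m := by exact_mod_cast Fintype.card_pos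
  have hval : ∀ a b : ZMod 2, ((a+b).val) = if a = b then 0 else 1 := by decide
  have hsum : ∑ j, (-1:ℝ)^((x j + y j).val) =
      (Fintype.card m : ℝ) - 2 * ((univ.filter fun j => x j ≠ y j).card) := by
    have h1 : ∀ j : m, (-1:ℝ)^((x j + y j).val)
        = 1 - 2 * (if x j ≠ y j then (1:ℝ) else 0) := by
      intro j; rw [hval]; by_cases h : x j = y j <;> simp [h] <;> norm_num
    rw [Finset.sum_congr rfl (fun j _ => h1 j), Finset.sum_sub_distrib]
    rw [← Finset.mul_sum, Finset.sum_boole]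
    simp
  unfold bias2 relHam
  rw [hsum]
  rw [show (1 - 2 * (((univ.filter fun j => x j ≠ y j).card : ℝ) / (Fintype.card m : ℝ)))
      = ((Fintype.card m : ℝ) - 2 * ((univ.filter fun j => x j ≠ y j).card)) / (Fintype.card m : ℝ)
      by field_simp]
  rw [abs_div, abs_of_pos hc]

lemma relHam_compl' {m : Type*} [Fintype m] [Nonempty m] (x y : m → ZMod 2) :
    relHam x (fun j => y j + 1) = 1 - relHam x y := by
  have hc : (0:ℝ) < Fintype.card m := by exact_mod_cast Fintype.card_pos
  have hiff : ∀ a b : ZMod 2, (a ≠ b + 1) ↔ a = b := by decide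
  unfold relHam
  have h1 : (univ.filter fun j => x j ≠ y j + 1) = univ.filter fun j => ¬(x j ≠ y j) := by
    apply Finset.filter_congr; intro j _; simp [hiff]
  rw [h1]
  have h2 := Finset.card_filter_add_card_filter_not
    (s := (univ : Finset m)) (p := fun j => x j ≠ y j)
  rw [Finset.card_univ] at h2
  have : ((univ.filter fun j => ¬(x j ≠ y j)).card : ℝ)
      = (Fintype.card m : ℝ) - (univ.filter fun j => x j ≠ y j).card := by
    have := congrArg (fun t : ℕ => (t:ℝ)) h2
    push_cast at this
    linarith
  rw [this]
  field_simp

theorem stmt_2 (n k : ℕ) (hn : 0 < n)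
    (ε β μ₀ : ℝ) (hε0 : 0 < ε) (hε : ε < 1/2) (hβ0 : 0 < β) (hβ : β < 1/4 - ε/2)
    (hμ₀ : 0 < μ₀)
    (E : Type) [Fintype E] [Nonempty E]
    (s : E → Finset (Fin n)) (hs : ∀ e, (s e).card = k)
    (hps : ∀ z : Fin n → ZMod 2, bias2 z ≤ 1/2 + 2*μ₀ → bias2 (dsumLift s z) ≤ 2*ε)
    (C₁ : Set (Fin n → ZMod 2)) (hC₁ : C₁.Nonempty)
    (yt : E → ZMod 2)
    (zstar : Fin n → ZMod 2) (hzstar : zstar ∈ C₁)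
    (hmin : ∀ y ∈ (dsumLift s) '' C₁, relHam (dsumLift s zstar) yt ≤ relHam y yt)
    (hclose : relHam (dsumLift s zstar) yt < 1/4 - ε/2 - β)
    (z : Fin n → ZMod 2) (hz : relHam (dsumLift s z) yt < 1/4 - ε/2) :
    relHam zstar z ≤ 1/4 - μ₀ ∨ relHam zstar (fun i => z i + 1) ≤ 1/4 - μ₀ := by
  haveI : Nonempty (Fin n) := Fin.pos_iff_nonempty.mp hn
  by_contra hcon
  push_neg at hcon
  obtain ⟨h1, h2⟩ := hcon
  rw [relHam_compl'] at h2
  -- bias of z* + z is < 1/2 + 2μ₀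
  have hbias : bias2 (fun i => zstar i + z i) ≤ 1/2 + 2*μ₀ := by
    rw [bias2_eq']
    rw [abs_le]
    constructor <;> [linarith; linarith]
  have hbd := hps _ hbias
  have hadd : dsumLift s (fun i => zstar i + z i)
      = fun e => dsumLift s zstar e + dsumLift s z e := by
    funext e
    simp [dsumLift, Finset.sum_add_distrib]
  rw [hadd, bias2_eq'] at hbd
  have hfar : 1/2 - ε ≤ relHam (dsumLift s zstar) (dsumLift s z) := by
    rw [abs_le] at hbd
    linarith [hbd.1]
  have htri := relHam_triangle' (dsumLift s zstar) yt (dsumLift s z)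
  rw [relHam_symm' yt (dsumLift s z)] at htri
  linarith
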